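/- Let f : ℚ₂ × [0,1] → ℝ satisfy: (a) for each r ∈ ℚ₂ there is a_r ∈ L²([0,1]) with f(r,t) = r + ∫₀ᵗ a_r(s) ds for all t ∈ [0,1]; (b) monotonicity: r₁ ≤ r₂ implies f(r₁,t) ≤ f(r₂,t) for all t; (c) coalescence: if f(r₁,t₀) = f(r₂,t₀) for some t₀ ∈ [0,1], then f(r₁,t) = f(r₂,t) for all t ∈ [t₀,1]. For r₁ < r₂ in ℚ₂ put τ(r₁,r₂) = min(inf{t ∈ [0,1] : f(r₁,t) = f(r₂,t)}, 1), and define I_n(f) = (1/2)[∫₀¹ a_0(s)² ds + Σ_{k=1}^{2^n} ∫₀^{τ((k−1)2^{−n}, k·2^{−n})} a_{k·2^{−n}}(s)² ds]. Then the sequence (I_n(f))_{n≥1} is nondecreasing: I_n(f) ≤ I_{n+1}(f) for all n ≥ 1. -/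

import Mathlib

open MeasureTheory Filter Topology

noncomputable section

/-- The set `ℚ₂ = {k/2^n : n ≥ 1, 0 ≤ k ≤ 2^n}` of dyadic rational points of `[0,1]`. -/
def dyadics : Set ℝ :=
  {x | ∃ n : ℕ, 1 ≤ n ∧ ∃ k : ℕ, k ≤ 2 ^ n ∧ x = (k : ℝ) / 2 ^ n}

/-- The coalescence time `τ(r₁,r₂) = min(inf {t ∈ [0,1] : f(r₁,t) = f(r₂,t)}, 1)`,
with the convention `inf ∅ = +∞` (realized by adjoining `1` to the set). -/
def coalTime (f : ℝ → ℝ → ℝ) (r₁ r₂ : ℝ) : ℝ :=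
  sInf ({t | t ∈ Set.Icc (0 : ℝ) 1 ∧ f r₁ t = f r₂ t} ∪ {1})

/-- The `n`-th level approximate rate functional
`Iₙ(f) = (1/2)[∫₀¹ a₀² + Σ_{k=1}^{2ⁿ} ∫₀^{τ((k−1)2⁻ⁿ, k2⁻ⁿ)} a_{k2⁻ⁿ}²]`. -/
def levelRate (a : ℝ → ℝ → ℝ) (f : ℝ → ℝ → ℝ) (n : ℕ) : ℝ :=
  (1 / 2) * ((∫ s in (0 : ℝ)..1, (a 0 s) ^ 2) +
    ∑ k ∈ Finset.Icc (1 : ℕ) (2 ^ n),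
      ∫ s in (0 : ℝ)..(coalTime f (((k : ℝ) - 1) / 2 ^ n) ((k : ℝ) / 2 ^ n)),
        (a ((k : ℝ) / 2 ^ n) s) ^ 2)

set_option maxHeartbeats 1000000

section LevelRateAuxSection

open Set Metric

namespace LevelRateAux


def S (f : ℝ → ℝ → ℝ) (r₁ r₂ : ℝ) : Set ℝ :=
  {t | t ∈ Set.Icc (0 : ℝ) 1 ∧ f r₁ t = f r₂ t} ∪ {1}

lemma one_mem_S (f : ℝ → ℝ → ℝ) (r₁ r₂ : ℝ) : (1 : ℝ) ∈ S f r₁ r₂ := Or.inr rfl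

lemma bddBelow_S (f : ℝ → ℝ → ℝ) (r₁ r₂ : ℝ) : BddBelow (S f r₁ r₂) := by
  refine ⟨0, fun t ht => ?_⟩
  rcases ht with h | h
  · exact h.1.1
  · simp only [Set.mem_singleton_iff] at h; simp [h]

lemma coalTime_mem (f : ℝ → ℝ → ℝ) (r₁ r₂ : ℝ) : coalTime f r₁ r₂ ∈ Set.Icc (0 : ℝ) 1 := by
  constructor
  · exact le_csInf ⟨1, one_mem_S f r₁ r₂⟩ fun t ht => by
      rcases ht with h | h
      · exact h.1.1
      · simp only [Set.mem_singleton_iff] at h; simp [h]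
  · exact csInf_le (bddBelow_S f r₁ r₂) (one_mem_S f r₁ r₂)

lemma coalTime_le (f : ℝ → ℝ → ℝ) (r₁ r₂ : ℝ) {t : ℝ} (ht : t ∈ S f r₁ r₂) :
    coalTime f r₁ r₂ ≤ t := csInf_le (bddBelow_S f r₁ r₂) ht

variable {f a : ℝ → ℝ → ℝ}

lemma integrableOn_of_ha
    (ha : ∀ r ∈ dyadics,
      MemLp (a r) 2 (volume.restrict (Set.Icc (0 : ℝ) 1)) ∧
      ∀ t ∈ Set.Icc (0 : ℝ) 1, f r t = r + ∫ s in (0 : ℝ)..t, a r s)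
    {r : ℝ} (hr : r ∈ dyadics) : IntegrableOn (a r) (Set.Icc (0 : ℝ) 1) volume :=
  (ha r hr).1.integrable (by norm_num)

lemma integrableOn_sq_of_ha
    (ha : ∀ r ∈ dyadics,
      MemLp (a r) 2 (volume.restrict (Set.Icc (0 : ℝ) 1)) ∧
      ∀ t ∈ Set.Icc (0 : ℝ) 1, f r t = r + ∫ s in (0 : ℝ)..t, a r s)
    {r : ℝ} (hr : r ∈ dyadics) :
    IntegrableOn (fun s => (a r s) ^ 2) (Set.Icc (0 : ℝ) 1) volume :=
  (ha r hr).1.integrable_sq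

lemma intervalIntegrable_subIcc {g : ℝ → ℝ} (hg : IntegrableOn g (Set.Icc (0 : ℝ) 1) volume)
    {c d : ℝ} (hc : c ∈ Set.Icc (0 : ℝ) 1) (hd : d ∈ Set.Icc (0 : ℝ) 1) :
    IntervalIntegrable g volume c d := by
  apply MeasureTheory.IntegrableOn.intervalIntegrable
  apply hg.mono_set
  exact Set.uIcc_subset_Icc hc hd

lemma continuousOn_f
    (ha : ∀ r ∈ dyadics,
      MemLp (a r) 2 (volume.restrict (Set.Icc (0 : ℝ) 1)) ∧
      ∀ t ∈ Set.Icc (0 : ℝ) 1, f r t = r + ∫ s in (0 : ℝ)..t, a r s)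
    {r : ℝ} (hr : r ∈ dyadics) : ContinuousOn (f r) (Set.Icc (0 : ℝ) 1) := by
  have hint : IntegrableOn (a r) (Set.uIcc (0 : ℝ) 1) volume := by
    rw [Set.uIcc_of_le (by norm_num : (0:ℝ) ≤ 1)]
    exact integrableOn_of_ha ha hr
  have hc : ContinuousOn (fun t => r + ∫ s in (0 : ℝ)..t, a r s) (Set.Icc (0 : ℝ) 1) := by
    have := intervalIntegral.continuousOn_primitive_interval (a := (0:ℝ)) (b := (1:ℝ)) hint
    rw [Set.uIcc_of_le (by norm_num : (0:ℝ) ≤ 1)] at this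
    exact continuousOn_const.add this
  exact hc.congr (ha r hr).2

lemma isClosed_S
    (ha : ∀ r ∈ dyadics,
      MemLp (a r) 2 (volume.restrict (Set.Icc (0 : ℝ) 1)) ∧
      ∀ t ∈ Set.Icc (0 : ℝ) 1, f r t = r + ∫ s in (0 : ℝ)..t, a r s)
    {r₁ r₂ : ℝ} (h₁ : r₁ ∈ dyadics) (h₂ : r₂ ∈ dyadics) : IsClosed (S f r₁ r₂) := by
  apply IsClosed.union _ isClosed_singleton
  have : {t | t ∈ Set.Icc (0 : ℝ) 1 ∧ f r₁ t = f r₂ t}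
      = Set.Icc (0 : ℝ) 1 ∩ (fun t => f r₁ t - f r₂ t) ⁻¹' {0} := by
    ext t; simp [sub_eq_zero]
  rw [this]
  exact ((continuousOn_f ha h₁).sub (continuousOn_f ha h₂)).preimage_isClosed_of_isClosed
    isClosed_Icc isClosed_singleton

lemma eq_on_of_coalTime_lt
    (ha : ∀ r ∈ dyadics,
      MemLp (a r) 2 (volume.restrict (Set.Icc (0 : ℝ) 1)) ∧
      ∀ t ∈ Set.Icc (0 : ℝ) 1, f r t = r + ∫ s in (0 : ℝ)..t, a r s)
    (hcoal : ∀ r₁ ∈ dyadics, ∀ r₂ ∈ dyadics, ∀ t₀ ∈ Set.Icc (0 : ℝ) 1,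
      f r₁ t₀ = f r₂ t₀ → ∀ t ∈ Set.Icc t₀ 1, f r₁ t = f r₂ t)
    {r₁ r₂ : ℝ} (h₁ : r₁ ∈ dyadics) (h₂ : r₂ ∈ dyadics)
    (hlt : coalTime f r₁ r₂ < 1) :
    ∀ t ∈ Set.Icc (coalTime f r₁ r₂) 1, f r₁ t = f r₂ t := by
  have hmem : coalTime f r₁ r₂ ∈ S f r₁ r₂ :=
    (isClosed_S ha h₁ h₂).csInf_mem ⟨1, one_mem_S f r₁ r₂⟩ (bddBelow_S f r₁ r₂)
  rcases hmem with h | h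
  · exact hcoal r₁ h₁ r₂ h₂ _ h.1 h.2
  · simp only [Set.mem_singleton_iff] at h
    exact absurd h (ne_of_lt hlt)

lemma coalTime_le_max
    (ha : ∀ r ∈ dyadics,
      MemLp (a r) 2 (volume.restrict (Set.Icc (0 : ℝ) 1)) ∧
      ∀ t ∈ Set.Icc (0 : ℝ) 1, f r t = r + ∫ s in (0 : ℝ)..t, a r s)
    (hcoal : ∀ r₁ ∈ dyadics, ∀ r₂ ∈ dyadics, ∀ t₀ ∈ Set.Icc (0 : ℝ) 1,
      f r₁ t₀ = f r₂ t₀ → ∀ t ∈ Set.Icc t₀ 1, f r₁ t = f r₂ t)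
    {r₀ r₁ r₂ : ℝ} (h₀ : r₀ ∈ dyadics) (h₁ : r₁ ∈ dyadics) (h₂ : r₂ ∈ dyadics) :
    coalTime f r₀ r₂ ≤ max (coalTime f r₀ r₁) (coalTime f r₁ r₂) := by
  set m := max (coalTime f r₀ r₁) (coalTime f r₁ r₂) with hm
  rcases lt_or_ge m 1 with hlt | hge
  · have e01 := eq_on_of_coalTime_lt ha hcoal h₀ h₁ (lt_of_le_of_lt (le_max_left _ _) hlt)
    have e12 := eq_on_of_coalTime_lt ha hcoal h₁ h₂ (lt_of_le_of_lt (le_max_right _ _) hlt)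
    have hm0 : 0 ≤ m := le_trans (coalTime_mem f r₀ r₁).1 (le_max_left _ _)
    have e1 : f r₀ m = f r₁ m := e01 m ⟨le_max_left _ _, hlt.le⟩
    have e2 : f r₁ m = f r₂ m := e12 m ⟨le_max_right _ _, hlt.le⟩
    exact coalTime_le f r₀ r₂ (Or.inl ⟨⟨hm0, hlt.le⟩, e1.trans e2⟩)
  · exact le_trans (coalTime_mem f r₀ r₂).2 hge

theorem ae_zero_of_intervals {h : ℝ → ℝ} (hint : IntegrableOn h (Set.Ioc (0:ℝ) 1) volume)
    {s : ℝ} (hs0 : (0:ℝ) ≤ s)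
    (hzero : ∀ u v : ℝ, s ≤ u → u ≤ v → v ≤ 1 → ∫ x in u..v, h x = 0) :
    ∀ᵐ x ∂volume, x ∈ Set.Ioc s 1 → h x = 0 := by
  set G : ℝ → ℝ := (Set.Ioc s 1).indicator h with hGdef
  have hint' : IntegrableOn h (Set.Ioc s 1) volume :=
    hint.mono_set (Set.Ioc_subset_Ioc hs0 le_rfl)
  have hGint : Integrable G volume := (integrable_indicator_iff measurableSet_Ioc).2 hint'
  have hloc : LocallyIntegrable G volume := hGint.locallyIntegrable
  have hLeb := IsUnifLocDoublingMeasure.ae_tendsto_average (μ := volume) hloc 1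
  have h1 : ∀ᵐ x ∂(volume : Measure ℝ), x ≠ 1 := by
    rw [ae_iff]
    simpa using measure_singleton (1 : ℝ)
  filter_upwards [hLeb, h1] with x hx hx1 hmem
  have hxlt : x < 1 := lt_of_le_of_ne hmem.2 hx1
  have hxgt : s < x := hmem.1
  have hten : Tendsto (fun r : ℝ => ⨍ y in closedBall x r, G y) (𝓝[>] 0) (𝓝 (G x)) := by
    apply hx (fun _ : ℝ => x) id tendsto_id
    filter_upwards [self_mem_nhdsWithin] with r hr
    simp only [Metric.mem_closedBall, dist_self, id]
    have : (0:ℝ) < r := hr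
    nlinarith
  have hev : (fun r : ℝ => ⨍ y in closedBall x r, G y) =ᶠ[𝓝[>] (0:ℝ)] fun _ => 0 := by
    have hpos : (0:ℝ) < min (x - s) (1 - x) := by
      apply lt_min <;> linarith
    have hmem2 : Set.Ioo (0:ℝ) (min (x - s) (1 - x)) ∈ 𝓝[>] (0:ℝ) :=
      Ioo_mem_nhdsGT_of_mem ⟨le_refl 0, hpos⟩
    filter_upwards [hmem2] with r hr
    have hr0 : 0 < r := hr.1
    have hr1 := (lt_min_iff.1 hr.2).1
    have hr2 := (lt_min_iff.1 hr.2).2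
    have hrs : s < x - r := by linarith
    have hrx : x + r ≤ 1 := by linarith
    have hball : closedBall x r = Set.Icc (x - r) (x + r) := Real.closedBall_eq_Icc
    have hsub : Set.Icc (x - r) (x + r) ⊆ Set.Ioc s 1 :=
      fun y hy => ⟨lt_of_lt_of_le hrs hy.1, hy.2.trans hrx⟩
    have hI : ∫ y in closedBall x r, G y ∂volume = 0 := by
      rw [hball, hGdef, setIntegral_indicator measurableSet_Ioc,
        Set.inter_eq_self_of_subset_left hsub, integral_Icc_eq_integral_Ioc,
        ← intervalIntegral.integral_of_le (by linarith : x - r ≤ x + r)]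
      exact hzero (x - r) (x + r) (by linarith) (by linarith) hrx
    rw [setAverage_eq, hI]
    simp
  have hzero' : Tendsto (fun r : ℝ => ⨍ y in closedBall x r, G y) (𝓝[>] 0) (𝓝 0) :=
    Tendsto.congr' hev.symm tendsto_const_nhds
  have hGx : G x = 0 := tendsto_nhds_unique hten hzero'
  rwa [hGdef, Set.indicator_of_mem hmem] at hGx

/-- Key inequality for a triple of dyadic levels. -/
theorem key
    (ha : ∀ r ∈ dyadics,
      MemLp (a r) 2 (volume.restrict (Set.Icc (0 : ℝ) 1)) ∧
      ∀ t ∈ Set.Icc (0 : ℝ) 1, f r t = r + ∫ s in (0 : ℝ)..t, a r s)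
    (hcoal : ∀ r₁ ∈ dyadics, ∀ r₂ ∈ dyadics, ∀ t₀ ∈ Set.Icc (0 : ℝ) 1,
      f r₁ t₀ = f r₂ t₀ → ∀ t ∈ Set.Icc t₀ 1, f r₁ t = f r₂ t)
    {r₀ r₁ r₂ : ℝ} (h₀ : r₀ ∈ dyadics) (h₁ : r₁ ∈ dyadics) (h₂ : r₂ ∈ dyadics) :
    (∫ x in (0:ℝ)..(coalTime f r₀ r₂), (a r₂ x) ^ 2)
      ≤ (∫ x in (0:ℝ)..(coalTime f r₀ r₁), (a r₁ x) ^ 2)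
        + ∫ x in (0:ℝ)..(coalTime f r₁ r₂), (a r₂ x) ^ 2 := by
  set T := coalTime f r₀ r₂ with hTdef
  set u := coalTime f r₀ r₁ with hudef
  set s := coalTime f r₁ r₂ with hsdef
  obtain ⟨hT0, hT1⟩ := coalTime_mem f r₀ r₂
  obtain ⟨hu0, hu1⟩ := coalTime_mem f r₀ r₁
  obtain ⟨hs0, hs1⟩ := coalTime_mem f r₁ r₂
  have hsq1 := integrableOn_sq_of_ha ha h₁
  have hsq2 := integrableOn_sq_of_ha ha h₂
  have hmemI : ∀ {c : ℝ}, 0 ≤ c → c ≤ 1 → c ∈ Set.Icc (0:ℝ) 1 := fun hc1 hc2 => ⟨hc1, hc2⟩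
  have hnonneg_u : 0 ≤ ∫ x in (0:ℝ)..u, (a r₁ x) ^ 2 :=
    intervalIntegral.integral_nonneg hu0 fun x _ => sq_nonneg _
  rcases le_or_gt T s with hTs | hsT
  · have hmono : (∫ x in (0:ℝ)..T, (a r₂ x) ^ 2) ≤ ∫ x in (0:ℝ)..s, (a r₂ x) ^ 2 := by
      apply intervalIntegral.integral_mono_interval le_rfl hT0 hTs
      · exact Filter.Eventually.of_forall fun x => sq_nonneg _
      · exact intervalIntegrable_subIcc hsq2 (hmemI le_rfl zero_le_one) (hmemI hs0 hs1)
    linarith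
  · have hTu : T ≤ u := by
      have hmax := coalTime_le_max ha hcoal h₀ h₁ h₂
      rw [← hTdef, ← hudef, ← hsdef] at hmax
      rcases le_total u s with h | h
      · rw [max_eq_right h] at hmax; linarith
      · rwa [max_eq_left h] at hmax
    have hslt1 : s < 1 := lt_of_lt_of_le hsT hT1
    have heqon := eq_on_of_coalTime_lt ha hcoal h₁ h₂ hslt1
    rw [← hsdef] at heqon
    have hae : ∀ᵐ x ∂volume, x ∈ Set.Ioc s 1 → a r₁ x = a r₂ x := by
      have hint : IntegrableOn (fun x => a r₁ x - a r₂ x) (Set.Ioc (0:ℝ) 1) volume := by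
        apply MeasureTheory.IntegrableOn.mono_set _ (Set.Ioc_subset_Icc_self (a := (0:ℝ)) (b := 1))
        exact (integrableOn_of_ha ha h₁).sub (integrableOn_of_ha ha h₂)
      have hz : ∀ u' v' : ℝ, s ≤ u' → u' ≤ v' → v' ≤ 1 →
          ∫ x in u'..v', (a r₁ x - a r₂ x) = 0 := by
        intro u' v' hsu' hu'v' hv'1
        have hu'mem : u' ∈ Set.Icc (0:ℝ) 1 := ⟨hs0.trans hsu', hu'v'.trans hv'1⟩
        have hv'mem : v' ∈ Set.Icc (0:ℝ) 1 := ⟨hu'mem.1.trans hu'v', hv'1⟩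
        have h0mem : (0:ℝ) ∈ Set.Icc (0:ℝ) 1 := hmemI le_rfl zero_le_one
        have i1u := intervalIntegrable_subIcc (integrableOn_of_ha ha h₁) h0mem hu'mem
        have i1v := intervalIntegrable_subIcc (integrableOn_of_ha ha h₁) h0mem hv'mem
        have i2u := intervalIntegrable_subIcc (integrableOn_of_ha ha h₂) h0mem hu'mem
        have i2v := intervalIntegrable_subIcc (integrableOn_of_ha ha h₂) h0mem hv'mem
        have e1 : ∫ x in u'..v', a r₁ x
            = (∫ x in (0:ℝ)..v', a r₁ x) - ∫ x in (0:ℝ)..u', a r₁ x :=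
          (intervalIntegral.integral_interval_sub_left i1v i1u).symm
        have e2 : ∫ x in u'..v', a r₂ x
            = (∫ x in (0:ℝ)..v', a r₂ x) - ∫ x in (0:ℝ)..u', a r₂ x :=
          (intervalIntegral.integral_interval_sub_left i2v i2u).symm
        have fu : f r₁ u' = f r₂ u' := heqon u' ⟨hsu', hu'v'.trans hv'1⟩
        have fv : f r₁ v' = f r₂ v' := heqon v' ⟨hsu'.trans hu'v', hv'1⟩
        have g1u := (ha r₁ h₁).2 u' hu'mem
        have g1v := (ha r₁ h₁).2 v' hv'mem
        have g2u := (ha r₂ h₂).2 u' hu'mem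
        have g2v := (ha r₂ h₂).2 v' hv'mem
        have i1uv := intervalIntegrable_subIcc (integrableOn_of_ha ha h₁) hu'mem hv'mem
        have i2uv := intervalIntegrable_subIcc (integrableOn_of_ha ha h₂) hu'mem hv'mem
        rw [intervalIntegral.integral_sub i1uv i2uv, e1, e2]
        have q1u : (∫ x in (0:ℝ)..u', a r₁ x) = f r₁ u' - r₁ := by rw [g1u]; ring
        have q1v : (∫ x in (0:ℝ)..v', a r₁ x) = f r₁ v' - r₁ := by rw [g1v]; ring
        have q2u : (∫ x in (0:ℝ)..u', a r₂ x) = f r₂ u' - r₂ := by rw [g2u]; ring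
        have q2v : (∫ x in (0:ℝ)..v', a r₂ x) = f r₂ v' - r₂ := by rw [g2v]; ring
        rw [q1u, q1v, q2u, q2v, fu, fv]
        ring
      have := ae_zero_of_intervals hint hs0 hz
      filter_upwards [this] with x hx hxm
      have := hx hxm
      linarith
    have iT : IntervalIntegrable (fun x => (a r₂ x) ^ 2) volume s T :=
      intervalIntegrable_subIcc hsq2 (hmemI hs0 hs1) (hmemI hT0 hT1)
    have i0s : IntervalIntegrable (fun x => (a r₂ x) ^ 2) volume 0 s :=
      intervalIntegrable_subIcc hsq2 (hmemI le_rfl zero_le_one) (hmemI hs0 hs1)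
    have hsplit : ∫ x in (0:ℝ)..T, (a r₂ x) ^ 2
        = (∫ x in (0:ℝ)..s, (a r₂ x) ^ 2) + ∫ x in s..T, (a r₂ x) ^ 2 :=
      (intervalIntegral.integral_add_adjacent_intervals i0s iT).symm
    have hcongr : ∫ x in s..T, (a r₂ x) ^ 2 = ∫ x in s..T, (a r₁ x) ^ 2 := by
      apply intervalIntegral.integral_congr_ae
      filter_upwards [hae] with x hx hxm
      rw [Set.uIoc_of_le hsT.le] at hxm
      rw [hx ⟨hxm.1, hxm.2.trans hT1⟩]
    have hmono2 : ∫ x in s..T, (a r₁ x) ^ 2 ≤ ∫ x in (0:ℝ)..u, (a r₁ x) ^ 2 := by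
      apply intervalIntegral.integral_mono_interval hs0 hsT.le hTu
      · exact Filter.Eventually.of_forall fun x => sq_nonneg _
      · exact intervalIntegrable_subIcc hsq1 (hmemI le_rfl zero_le_one) (hmemI hu0 hu1)
    have hnn_s : 0 ≤ ∫ x in (0:ℝ)..s, (a r₂ x) ^ 2 :=
      intervalIntegral.integral_nonneg hs0 fun x _ => sq_nonneg _
    linarith


/-- Splitting a sum over `Icc 1 (2m)` into pairs. -/
lemma sum_pair (m : ℕ) (g : ℕ → ℝ) :
    ∑ j ∈ Finset.Icc 1 (2 * m), g j = ∑ k ∈ Finset.Icc 1 m, (g (2 * k - 1) + g (2 * k)) := by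
  induction m with
  | zero => simp
  | succ m ih =>
    have h1 : 2 * (m + 1) = (2 * m + 1) + 1 := by ring
    rw [h1, Finset.sum_Icc_succ_top (by omega), Finset.sum_Icc_succ_top (by omega),
      Finset.sum_Icc_succ_top (by omega), ih]
    have h2 : 2 * (m + 1) - 1 = 2 * m + 1 := by omega
    have h3 : 2 * (m + 1) = 2 * m + 1 + 1 := by omega
    rw [h2, h3]
    ring

end LevelRateAux

end LevelRateAuxSection

open LevelRateAux in
/-- **Monotonicity of the approximate rate functionals.** For a coalescing family of
absolutely continuous dyadic paths, the sequence `(Iₙ(f))` is nondecreasing. -/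
theorem levelRate_monotone
    (f : ℝ → ℝ → ℝ) (a : ℝ → ℝ → ℝ)
    (ha : ∀ r ∈ dyadics,
      MemLp (a r) 2 (volume.restrict (Set.Icc (0 : ℝ) 1)) ∧
      ∀ t ∈ Set.Icc (0 : ℝ) 1, f r t = r + ∫ s in (0 : ℝ)..t, a r s)
    (hmono : ∀ r₁ ∈ dyadics, ∀ r₂ ∈ dyadics, r₁ ≤ r₂ →
      ∀ t ∈ Set.Icc (0 : ℝ) 1, f r₁ t ≤ f r₂ t)
    (hcoal : ∀ r₁ ∈ dyadics, ∀ r₂ ∈ dyadics, ∀ t₀ ∈ Set.Icc (0 : ℝ) 1,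
      f r₁ t₀ = f r₂ t₀ → ∀ t ∈ Set.Icc t₀ 1, f r₁ t = f r₂ t) :
    ∀ n : ℕ, 1 ≤ n → levelRate a f n ≤ levelRate a f (n + 1) := by
  intro n hn
  have hsum : (∑ k ∈ Finset.Icc (1 : ℕ) (2 ^ n),
        ∫ s in (0 : ℝ)..(coalTime f (((k : ℝ) - 1) / 2 ^ n) ((k : ℝ) / 2 ^ n)),
          (a ((k : ℝ) / 2 ^ n) s) ^ 2)
      ≤ ∑ k ∈ Finset.Icc (1 : ℕ) (2 ^ (n + 1)),
        ∫ s in (0 : ℝ)..(coalTime f (((k : ℝ) - 1) / 2 ^ (n + 1)) ((k : ℝ) / 2 ^ (n + 1))),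
          (a ((k : ℝ) / 2 ^ (n + 1)) s) ^ 2 := by
    have h2 : (2 : ℕ) ^ (n + 1) = 2 * 2 ^ n := by ring
    rw [h2, sum_pair]
    apply Finset.sum_le_sum
    intro k hk
    obtain ⟨hk1, hk2⟩ := Finset.mem_Icc.1 hk
    have hcast : ((2 * k - 1 : ℕ) : ℝ) = 2 * (k : ℝ) - 1 := by
      have h1k : (1 : ℕ) ≤ 2 * k := by omega
      push_cast [Nat.cast_sub h1k]
      ring
    rw [hcast]
    have hpow : ((2 : ℝ) ^ (n + 1)) = 2 * 2 ^ n := by ring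
    have hne : ((2 : ℝ) ^ n) ≠ 0 := by positivity
    have eA : (2 * (k : ℝ) - 1 - 1) / 2 ^ (n + 1) = ((k : ℝ) - 1) / 2 ^ n := by
      rw [hpow]; field_simp; ring
    have eB : ((2 * k : ℕ) : ℝ) / 2 ^ (n + 1) = (k : ℝ) / 2 ^ n := by
      push_cast; rw [hpow]; field_simp
    have eC : (((2 * k : ℕ) : ℝ) - 1) / 2 ^ (n + 1) = (2 * (k : ℝ) - 1) / 2 ^ (n + 1) := by
      push_cast; ring
    rw [eA, eB, eC]
    have h₀ : ((k : ℝ) - 1) / 2 ^ n ∈ dyadics := by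
      refine ⟨n, hn, k - 1, by omega, ?_⟩
      push_cast [Nat.cast_sub hk1]
      ring
    have h₂ : (k : ℝ) / 2 ^ n ∈ dyadics := ⟨n, hn, k, hk2, rfl⟩
    have h₁ : (2 * (k : ℝ) - 1) / 2 ^ (n + 1) ∈ dyadics := by
      refine ⟨n + 1, by omega, 2 * k - 1, by omega, ?_⟩
      rw [hcast]
    exact key ha hcoal h₀ h₁ h₂
  unfold levelRate
  linarith

end
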